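/- Let f : ℝⁿ → ℝ be continuously differentiable and suppose f(y) ≤ f(x) + ⟨∇f(x), y − x⟩ + (L/2)‖y − x‖² for all x, y ∈ ℝⁿ and f is convex. Then the gradient of f is L-Lipschitz: ‖∇f(y) − ∇f(x)‖ ≤ L‖y − x‖ for all x, y. -/

import Mathlib

lemma grad_ineq' {n : ℕ} (f : EuclideanSpace ℝ (Fin n) → ℝ)
    (g : EuclideanSpace ℝ (Fin n) → EuclideanSpace ℝ (Fin n))
    (hg : ∀ x, HasGradientAt f (g x) x)
    (hconv : ConvexOn ℝ Set.univ f) (x y : EuclideanSpace ℝ (Fin n)) :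
    f x + (inner ℝ (g x) (y - x) : ℝ) ≤ f y := by
  set v := y - x with hv
  have h1 : HasDerivAt (fun t : ℝ => x + t • v) v 0 := by
    simpa using ((hasDerivAt_id (0:ℝ)).smul_const v).const_add x
  have h2 : HasFDerivAt f ((InnerProductSpace.toDual ℝ _) (g x)) ((fun t : ℝ => x + t • v) 0) := by
    simpa using (hg x).hasFDerivAt
  have hh : HasDerivAt (fun t : ℝ => f (x + t • v)) (inner ℝ (g x) v : ℝ) 0 := by
    have := h2.comp_hasDerivAt 0 h1; simp at this; exact this
  have hslope := hasDerivAt_iff_tendsto_slope.mp hh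
  have hslope' : Filter.Tendsto (slope (fun t : ℝ => f (x + t • v)) 0)
      (nhdsWithin 0 (Set.Ioi 0)) (nhds (inner ℝ (g x) v : ℝ)) :=
    hslope.mono_left (nhdsWithin_mono _ (fun t ht => ne_of_gt ht))
  have hbound : ∀ᶠ t in nhdsWithin (0:ℝ) (Set.Ioi 0),
      slope (fun t : ℝ => f (x + t • v)) 0 t ≤ f y - f x := by
    filter_upwards [Ioc_mem_nhdsGT_of_mem (by norm_num : (0:ℝ) ∈ Set.Ico 0 1)] with t ht
    have ht0 : 0 < t := ht.1
    have ht1 : t ≤ 1 := ht.2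
    have hcomb : f (x + t • v) ≤ (1 - t) * f x + t * f y := by
      have := hconv.2 (Set.mem_univ x) (Set.mem_univ y)
        (by linarith : (0:ℝ) ≤ 1 - t) (le_of_lt ht0) (by ring)
      have hxy : (1 - t) • x + t • y = x + t • v := by
        rw [hv]; module
      rwa [hxy] at this
    have : slope (fun t : ℝ => f (x + t • v)) 0 t = (f (x + t • v) - f x) / t := by
      simp [slope_def_field]
    rw [this]
    rw [div_le_iff₀ ht0]
    nlinarith
  have := le_of_tendsto hslope' hbound
  linarith

theorem stmt_1 {n : ℕ} (f : EuclideanSpace ℝ (Fin n) → ℝ)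
    (g : EuclideanSpace ℝ (Fin n) → EuclideanSpace ℝ (Fin n)) (L : ℝ)
    (hf : ContDiff ℝ 1 f) (hg : ∀ x, HasGradientAt f (g x) x) (hL : 0 < L)
    (hconv : ConvexOn ℝ Set.univ f)
    (henv : ∀ x y, f y ≤ f x + (inner ℝ (g x) (y - x) : ℝ) + L / 2 * ‖y - x‖ ^ 2) :
    ∀ x y, ‖g y - g x‖ ≤ L * ‖y - x‖ := by
  have key : ∀ x y, f x + (inner ℝ (g x) (y - x) : ℝ) + 1 / (2 * L) * ‖g y - g x‖ ^ 2 ≤ f y := by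
    intro x y
    set d := g y - g x with hd
    set u := y - L⁻¹ • d with hu
    have h1 : f x + (inner ℝ (g x) (u - x) : ℝ) ≤ f u := grad_ineq' f g hg hconv x u
    have h2 : f u ≤ f y + (inner ℝ (g y) (u - y) : ℝ) + L / 2 * ‖u - y‖ ^ 2 := henv y u
    have huy : u - y = -(L⁻¹ • d) := by rw [hu]; abel
    have hinner_y : (inner ℝ (g y) (u - y) : ℝ) = -(L⁻¹ * inner ℝ (g y) d) := by
      rw [huy, inner_neg_right, inner_smul_right]
    have hnorm : ‖u - y‖ ^ 2 = L⁻¹ ^ 2 * ‖d‖ ^ 2 := by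
      rw [huy, norm_neg, norm_smul]
      simp [abs_of_pos (inv_pos.mpr hL), mul_pow]
    have hinner_x : (inner ℝ (g x) (u - x) : ℝ) = inner ℝ (g x) (y - x) - L⁻¹ * inner ℝ (g x) d := by
      have : u - x = (y - x) - L⁻¹ • d := by rw [hu]; abel
      rw [this, inner_sub_right, inner_smul_right]
    have hdd : (inner ℝ (g y) d : ℝ) - inner ℝ (g x) d = ‖d‖ ^ 2 := by
      rw [← inner_sub_left, ← hd, real_inner_self_eq_norm_sq]
    have hL' : L ≠ 0 := ne_of_gt hL
    rw [hinner_x] at h1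
    rw [hinner_y, hnorm] at h2
    have hfield : L / 2 * (L⁻¹ ^ 2 * ‖d‖ ^ 2) = 1 / (2 * L) * ‖d‖ ^ 2 := by
      field_simp
    have hsub : L⁻¹ * (inner ℝ (g y) d : ℝ) - L⁻¹ * inner ℝ (g x) d = L⁻¹ * ‖d‖ ^ 2 := by
      rw [← mul_sub, hdd]
    have hinv : L⁻¹ * ‖d‖ ^ 2 - 1 / (2 * L) * ‖d‖ ^ 2 = 1 / (2 * L) * ‖d‖ ^ 2 := by
      field_simp; ring
    linarith [h1, h2, hfield, hsub, hinv]
  intro x y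
  have k1 := key x y
  have k2 := key y x
  have hsum : 1 / L * ‖g y - g x‖ ^ 2 ≤ (inner ℝ (g y - g x) (y - x) : ℝ) := by
    have hxy : (inner ℝ (g y) (x - y) : ℝ) = - inner ℝ (g y) (y - x) := by
      rw [← inner_neg_right]; congr 1; abel
    have hnn : ‖g x - g y‖ = ‖g y - g x‖ := by rw [norm_sub_rev]
    rw [hnn] at k2
    rw [inner_sub_left]
    rw [hxy] at k2
    have h2L : 1 / (2 * L) * ‖g y - g x‖ ^ 2 + 1 / (2 * L) * ‖g y - g x‖ ^ 2
        = 1 / L * ‖g y - g x‖ ^ 2 := by field_simp; ring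
    nlinarith [k1, k2]
  have hcs : (inner ℝ (g y - g x) (y - x) : ℝ) ≤ ‖g y - g x‖ * ‖y - x‖ :=
    real_inner_le_norm _ _
  by_cases h0 : ‖g y - g x‖ = 0
  · rw [h0]; positivity
  · have hpos : 0 < ‖g y - g x‖ := lt_of_le_of_ne (norm_nonneg _) (Ne.symm h0)
    have : 1 / L * ‖g y - g x‖ ^ 2 ≤ ‖g y - g x‖ * ‖y - x‖ := le_trans hsum hcs
    rw [div_mul_eq_mul_div, one_mul, div_le_iff₀ hL] at this
    calc ‖g y - g x‖ = ‖g y - g x‖ ^ 2 / ‖g y - g x‖ := by field_simp [pow_two]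
    _ ≤ ‖g y - g x‖ * ‖y - x‖ * L / ‖g y - g x‖ := by
        gcongr
    _ = L * ‖y - x‖ := by field_simp
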